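/- Let m be a strictly positive integer and let u, v ∈ {0,1}^m be binary vectors with u ≼_SH v, i.e., either |u| ≠ |v| and supp(u) ⊆ supp(v), or |u| = |v| = l and, writing supp(u) = {s_1 < ⋯ < s_l} and supp(v) = {t_1 < ⋯ < t_l}, s_i ≤ t_i for all 1 ≤ i ≤ l. Then Rel(C^u; p) ≤ Rel(C^v; p) for all p ∈ [0,1]. -/

import Mathlib

/-- Reliability of the elementary networks: `g false p = p²` (series),
`g true p = 1 - (1-p)²` (parallel). -/
def g (b : Bool) (p : ℝ) : ℝ := if b then 1 - (1 - p)^2 else p^2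

/-- Reliability polynomial of the composition `C^u`,
`Rel(C^u;p) = (g_{u_1} ∘ ⋯ ∘ g_{u_m})(p)`. -/
def RelC (m : ℕ) (u : Fin m → Bool) (p : ℝ) : ℝ :=
  (List.finRange m).foldr (fun i q => g (u i) q) p

/-- Support of a binary vector. -/
def supp (m : ℕ) (u : Fin m → Bool) : Finset (Fin m) :=
  Finset.univ.filter (fun i => u i = true)

/-- Rank function `ρ(u) = ∑_{i ∈ supp u} i`, with 1-based index values. -/
def rho (m : ℕ) (u : Fin m → Bool) : ℕ :=
  ∑ i ∈ supp m u, ((i : ℕ) + 1)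

/-- The support of `u`, sorted increasingly. -/
def sortedSupp (m : ℕ) (u : Fin m → Bool) : List (Fin m) :=
  Finset.sort (supp m u) (· ≤ ·)

/-- The order `≼_H`: same Hamming weight and `s_i ≤ t_i` for every `i`. -/
def relH (m : ℕ) (u v : Fin m → Bool) : Prop :=
  (supp m u).card = (supp m v).card ∧
    ∀ (i : ℕ) (hu : i < (sortedSupp m u).length) (hv : i < (sortedSupp m v).length),
      (sortedSupp m u).get ⟨i, hu⟩ ≤ (sortedSupp m v).get ⟨i, hv⟩

/-- The order `≼_SH`. -/
def relSH (m : ℕ) (u v : Fin m → Bool) : Prop :=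
  ((supp m u).card ≠ (supp m v).card ∧ supp m u ⊆ supp m v) ∨ relH m u v

/-- The partial order generated by `≼_SH` (reflexive–transitive closure). -/
def leSH (m : ℕ) (u v : Fin m → Bool) : Prop :=
  Relation.ReflTransGen (relSH m) u v


lemma g_mem {b p} (hp : p ∈ Set.Icc (0:ℝ) 1) : g b p ∈ Set.Icc (0:ℝ) 1 := by
  obtain ⟨h0, h1⟩ := hp
  cases b <;> simp only [g, if_true, if_false, Bool.false_eq_true, Set.mem_Icc] <;> constructor <;> nlinarith

lemma g_mono {b} {p q : ℝ} (hp : p ∈ Set.Icc (0:ℝ) 1) (hq : q ∈ Set.Icc (0:ℝ) 1)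
    (h : p ≤ q) : g b p ≤ g b q := by
  obtain ⟨h0, h1⟩ := hp; obtain ⟨h0', h1'⟩ := hq
  cases b <;> simp [g] <;> nlinarith

lemma g_false_le_true {p : ℝ} (hp : p ∈ Set.Icc (0:ℝ) 1) : g false p ≤ g true p := by
  obtain ⟨h0, h1⟩ := hp; simp [g]; nlinarith

lemma g_swap {q : ℝ} (hq : q ∈ Set.Icc (0:ℝ) 1) : g true (g false q) ≤ g false (g true q) := by
  obtain ⟨h0, h1⟩ := hq; simp [g]; nlinarith [sq_nonneg (q*(1-q))]

lemma RelC_succ (m : ℕ) (u : Fin (m+1) → Bool) (p : ℝ) :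
    RelC (m+1) u p = g (u 0) (RelC m (fun i => u i.succ) p) := by
  simp [RelC, List.finRange_succ, List.foldr_map]

lemma RelC_mem (m : ℕ) (u : Fin m → Bool) {p : ℝ} (hp : p ∈ Set.Icc (0:ℝ) 1) :
    RelC m u p ∈ Set.Icc (0:ℝ) 1 := by
  induction m with
  | zero => simpa [RelC] using hp
  | succ n ih => rw [RelC_succ]; exact g_mem (ih _)

lemma RelC_pointwise (m : ℕ) (u v : Fin m → Bool) (huv : ∀ i, u i = true → v i = true)
    {p : ℝ} (hp : p ∈ Set.Icc (0:ℝ) 1) : RelC m u p ≤ RelC m v p := by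
  induction m with
  | zero => simp [RelC]
  | succ n ih =>
    rw [RelC_succ, RelC_succ]
    have h1 : RelC n (fun i => u i.succ) p ≤ RelC n (fun i => v i.succ) p :=
      ih _ _ (fun i => huv i.succ)
    have hu := RelC_mem n (fun i => u i.succ) hp
    have hv := RelC_mem n (fun i => v i.succ) hp
    rcases hb : u 0 with _ | _
    · calc g false (RelC n (fun i => u i.succ) p) ≤ g false (RelC n (fun i => v i.succ) p) :=
            g_mono hu hv h1
        _ ≤ g (v 0) (RelC n (fun i => v i.succ) p) := by
            rcases hb' : v 0 with _ | _
            · exact le_refl _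
            · exact g_false_le_true (RelC_mem _ _ hp)
    · rw [huv 0 hb]; exact g_mono hu hv h1

lemma RelC_swap : ∀ (m : ℕ) (u : Fin m → Bool) (j : ℕ) (hj : j + 1 < m),
    u ⟨j, by omega⟩ = true → u ⟨j+1, hj⟩ = false → ∀ {p : ℝ}, p ∈ Set.Icc (0:ℝ) 1 →
    RelC m u p ≤
      RelC m (fun k => if k = ⟨j, by omega⟩ then false else if k = ⟨j+1, hj⟩ then true else u k) p := by
  intro m
  induction m with
  | zero => intro u j hj; omega
  | succ n ih =>
    intro u j hj hu1 hu0 p hp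
    set w : Fin (n+1) → Bool :=
      (fun k => if k = ⟨j, by omega⟩ then false else if k = ⟨j+1, hj⟩ then true else u k) with hw
    rcases j with _ | k
    · -- j = 0, need n ≥ 1
      rcases n with _ | n'
      · omega
      · rw [RelC_succ, RelC_succ, RelC_succ, RelC_succ]
        have htt : (fun i : Fin n' => w i.succ.succ) = (fun i : Fin n' => u i.succ.succ) := by
          funext i
          simp only [hw, Fin.ext_iff]
          simp
        have h00 : u 0 = true := by convert hu1 using 2; rfl
        have h01 : u (Fin.succ 0) = false := by
          convert hu0 using 2; rfl
        have hw0 : w 0 = false := by simp only [hw, Fin.ext_iff]; simp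
        have hw1 : w (Fin.succ 0) = true := by simp only [hw, Fin.ext_iff]; simp
        simp only [htt, h00, h01, hw0, hw1]
        exact g_swap (RelC_mem _ _ hp)
    · -- j = k+1
      rw [RelC_succ, RelC_succ]
      have hw0 : w 0 = u 0 := by
        simp [hw, Fin.ext_iff]
      have htail : (fun i : Fin n => w i.succ) =
          (fun i : Fin n => if i = ⟨k, by omega⟩ then false else if i = ⟨k+1, by omega⟩ then true
            else (fun i : Fin n => u i.succ) i) := by
        funext i
        have e1 : (i.succ = (⟨k+1, by omega⟩ : Fin (n+1))) ↔ i = ⟨k, by omega⟩ := by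
          simp [Fin.ext_iff]
        have e2 : (i.succ = (⟨k+2, hj⟩ : Fin (n+1))) ↔ i = ⟨k+1, by omega⟩ := by
          simp [Fin.ext_iff]
        simp only [hw]
        rw [show ((⟨k+1+1, hj⟩ : Fin (n+1)) = ⟨k+2, hj⟩) from rfl]
        by_cases h1 : i = ⟨k, by omega⟩
        · simp [h1, e1.mpr h1]
        · by_cases h2 : i = ⟨k+1, by omega⟩
          · simp [h2, e2.mpr h2, e1, h1]
          · simp [h1, h2, e1, e2]
      rw [hw0, htail]
      refine g_mono (RelC_mem _ _ hp) (RelC_mem _ _ hp) ?_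
      exact ih (fun i => u i.succ) k (by omega) (by convert hu1 using 2 <;> simp [Fin.ext_iff])
        (by convert hu0 using 2 <;> simp [Fin.ext_iff]) hp

lemma mem_supp_iff {m : ℕ} {u : Fin m → Bool} {i : Fin m} : i ∈ supp m u ↔ u i = true := by
  simp [supp]

lemma eq_of_supp_eq {m : ℕ} {u v : Fin m → Bool} (h : supp m u = supp m v) : u = v := by
  funext i
  have : (i ∈ supp m u) ↔ (i ∈ supp m v) := by rw [h]
  rw [mem_supp_iff, mem_supp_iff] at this
  cases hu : u i <;> cases hv : v i <;> simp [hu, hv] at this ⊢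

set_option maxHeartbeats 1000000 in
lemma step_lemma (m : ℕ) (u v : Fin m → Bool) (h : relH m u v) (hne : u ≠ v) :
    ∃ (j : ℕ) (hj : j + 1 < m),
      u ⟨j, by omega⟩ = true ∧ u ⟨j+1, hj⟩ = false ∧
      relH m (fun k => if k = ⟨j, by omega⟩ then false else if k = ⟨j+1, hj⟩ then true else u k) v ∧
      rho m (fun k => if k = ⟨j, by omega⟩ then false else if k = ⟨j+1, hj⟩ then true else u k)
        = rho m u + 1 := by
  classical
  set s := sortedSupp m u with hs
  set t := sortedSupp m v with ht
  have hl : s.length = t.length := by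
    rw [hs, ht]; unfold sortedSupp; rw [Finset.length_sort, Finset.length_sort, h.1]
  have hsort_s : s.Pairwise (· < ·) := (Finset.sortedLT_sort _).pairwise
  have hsort_t : t.Pairwise (· < ·) := (Finset.sortedLT_sort _).pairwise
  have smono : StrictMono s.get := hsort_s.sortedLT.strictMono_get
  have tmono : StrictMono t.get := hsort_t.sortedLT.strictMono_get
  have hst : s ≠ t := by
    intro hcontra
    apply hne
    apply eq_of_supp_eq
    ext x
    rw [← Finset.mem_sort (α := Fin m) (· ≤ ·), ← Finset.mem_sort (α := Fin m) (· ≤ ·)]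
    rw [show Finset.sort (supp m u) (· ≤ ·) = s from rfl, show Finset.sort (supp m v) (· ≤ ·) = t from rfl, hcontra]
  -- the set of indices where s < t
  set D : Finset (Fin s.length) :=
    Finset.univ.filter (fun i => s.get i < t.get (Fin.cast hl i)) with hD
  have hDne : D.Nonempty := by
    by_contra hemp
    apply hst
    apply List.ext_get hl
    intro n h1 h2
    have hle : s.get ⟨n, h1⟩ ≤ t.get ⟨n, h2⟩ := h.2 n h1 h2
    have hnl : ¬ (s.get ⟨n, h1⟩ < t.get (Fin.cast hl ⟨n, h1⟩)) := by
      intro hlt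
      exact hemp ⟨⟨n, h1⟩, by rw [hD, Finset.mem_filter]; exact ⟨Finset.mem_univ _, hlt⟩⟩
    exact le_antisymm hle (not_lt.mp hnl)
  set istar : Fin s.length := D.max' hDne with histar
  have histar_mem : istar ∈ D := D.max'_mem hDne
  have histar_lt : s.get istar < t.get (Fin.cast hl istar) := by
    have hmem := histar_mem
    rw [hD, Finset.mem_filter] at hmem
    exact hmem.2
  -- key: indices above istar have s.get = t.get, hence big values
  have key : ∀ (i : Fin s.length), istar < i →
      (s.get istar : ℕ) + 1 < (s.get i : ℕ) := by
    intro i hi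
    have hnotD : ¬ s.get i < t.get (Fin.cast hl i) := by
      intro hlt
      have hmem : i ∈ D := by rw [hD, Finset.mem_filter]; exact ⟨Finset.mem_univ _, hlt⟩
      exact absurd (D.le_max' i hmem) (not_le.mpr hi)
    have hle : s.get i ≤ t.get (Fin.cast hl i) := h.2 i.1 i.2 ((Fin.cast hl i).2)
    have heq : s.get i = t.get (Fin.cast hl i) := le_antisymm hle (not_lt.mp hnotD)
    have h1 : t.get (Fin.cast hl istar) < t.get (Fin.cast hl i) := by
      apply tmono
      exact hi
    have h2 : (s.get istar : ℕ) < (t.get (Fin.cast hl istar) : ℕ) := histar_lt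
    have h3 : (t.get (Fin.cast hl istar) : ℕ) < (t.get (Fin.cast hl i) : ℕ) := h1
    have h4 : (s.get i : ℕ) = (t.get (Fin.cast hl i) : ℕ) := congrArg Fin.val heq
    omega
  -- define j, jF
  set jV : Fin m := s.get istar with hjV
  have hjm : (jV : ℕ) + 1 < m := by
    have h2 : (jV : ℕ) < (t.get (Fin.cast hl istar) : ℕ) := histar_lt
    have h3 : (t.get (Fin.cast hl istar) : ℕ) < m := (t.get (Fin.cast hl istar)).2
    omega
  set jF : Fin m := ⟨(jV : ℕ) + 1, hjm⟩ with hjF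
  have hjVF : jV ≠ jF := by
    intro hcon
    have := congrArg Fin.val hcon
    simp [hjF] at this
  have ebr1 : ((⟨(jV : ℕ)+1, hjm⟩ : Fin m) : ℕ) = (jV : ℕ)+1 := rfl
  have ebr2 : (jV : ℕ) = ((s.get istar : Fin m) : ℕ) := rfl
  have ebr3 : ((jF : Fin m) : ℕ) = (jV : ℕ)+1 := rfl
  have hjV_mem : jV ∈ supp m u := by
    rw [← Finset.mem_sort (α := Fin m) (· ≤ ·)]
    exact List.get_mem s istar
  have huj : u jV = true := mem_supp_iff.mp hjV_mem
  have hjFnot : jF ∉ supp m u := by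
    intro hmem
    rw [← Finset.mem_sort (α := Fin m) (· ≤ ·)] at hmem
    rw [show Finset.sort (supp m u) (· ≤ ·) = s from rfl] at hmem
    obtain ⟨i', hi'⟩ := List.mem_iff_get.mp hmem
    have ejF : ((jF : Fin m) : ℕ) = ((s.get istar : Fin m) : ℕ) + 1 := rfl
    rcases lt_trichotomy i' istar with hc | hc | hc
    · have hv0 := smono hc
      rw [hi'] at hv0
      have hv1 : ((jF : Fin m) : ℕ) < ((s.get istar : Fin m) : ℕ) := hv0
      omega
    · rw [hc] at hi'
      exact hjVF hi'
    · have hv0 := key i' hc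
      rw [hi'] at hv0
      have hv1 : ((s.get istar : Fin m) : ℕ) + 1 < ((jF : Fin m) : ℕ) := hv0
      omega
  have hujF : u jF = false := by
    cases hcase : u jF
    · rfl
    · exact absurd (mem_supp_iff.mpr hcase) hjFnot
  set w : Fin m → Bool := fun k => if k = jV then false else if k = jF then true else u k with hw
  -- support of w
  have hw_supp : supp m w = insert jF ((supp m u).erase jV) := by
    ext k
    rw [mem_supp_iff, Finset.mem_insert, Finset.mem_erase, mem_supp_iff]
    by_cases h1 : k = jV
    · subst h1
      simp [hw, hjVF]
    · by_cases h2 : k = jF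
      · subst h2
        simp [hw, h1]
      · simp [hw, h1, h2]
  have hjFmem' : jF ∉ (supp m u).erase jV := fun hmem => hjFnot (Finset.mem_of_mem_erase hmem)
  have hrho : rho m w = rho m u + 1 := by
    have e1 : rho m w = ((jF : ℕ) + 1) + ∑ i ∈ (supp m u).erase jV, ((i : ℕ) + 1) := by
      rw [rho, hw_supp, Finset.sum_insert hjFmem']
    have e2 : ((jV : ℕ) + 1) + ∑ i ∈ (supp m u).erase jV, ((i : ℕ) + 1)
        = ∑ i ∈ supp m u, ((i : ℕ) + 1) :=
      Finset.add_sum_erase (supp m u) (f := fun i : Fin m => (i : ℕ) + 1) hjV_mem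
    have e2' : rho m u = ∑ i ∈ supp m u, ((i : ℕ) + 1) := rfl
    have e3 : (jF : ℕ) = (jV : ℕ) + 1 := rfl
    omega
  -- the sorted support of w
  set L : List (Fin m) := s.set istar.1 jF with hL
  have hLlen : L.length = s.length := List.length_set ..
  have hLget : ∀ (i : ℕ) (hi : i < s.length),
      L.get ⟨i, by omega⟩ = if istar.1 = i then jF else s.get ⟨i, hi⟩ := by
    intro i hi
    simp [hL, List.getElem_set]
  have hLsorted : L.Pairwise (· < ·) := by
    rw [List.pairwise_iff_get]
    intro a b hab
    have ha : a.1 < s.length := by omega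
    have hb : b.1 < s.length := by omega
    have hga := hLget a.1 ha
    have hgb := hLget b.1 hb
    rw [show (⟨a.1, by omega⟩ : Fin L.length) = a from rfl] at hga
    rw [show (⟨b.1, by omega⟩ : Fin L.length) = b from rfl] at hgb
    rw [hga, hgb]
    by_cases h1 : istar.1 = a.1
    · rw [if_pos h1]
      have hbi : istar < (⟨b.1, hb⟩ : Fin s.length) := by
        have hv : (istar : ℕ) < b.1 := by rw [Fin.lt_def] at hab; omega
        exact hv
      have h2 : istar.1 ≠ b.1 := by rw [Fin.lt_def] at hab; omega
      rw [if_neg h2]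
      have hkey : ((s.get istar : Fin m) : ℕ) + 1 < ((s.get ⟨b.1, hb⟩ : Fin m) : ℕ) :=
        key ⟨b.1, hb⟩ hbi
      have e : ((jF : Fin m) : ℕ) = ((s.get istar : Fin m) : ℕ) + 1 := rfl
      rw [Fin.lt_def]
      omega
    · rw [if_neg h1]
      by_cases h2 : istar.1 = b.1
      · rw [if_pos h2]
        have hai : (⟨a.1, ha⟩ : Fin s.length) < istar := by
          have hv : a.1 < (istar : ℕ) := by rw [Fin.lt_def] at hab; omega
          exact hv
        have hv : ((s.get ⟨a.1, ha⟩ : Fin m) : ℕ) < ((s.get istar : Fin m) : ℕ) := smono hai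
        have e : ((jF : Fin m) : ℕ) = ((s.get istar : Fin m) : ℕ) + 1 := rfl
        rw [Fin.lt_def]
        omega
      · rw [if_neg h2]
        exact smono (show (⟨a.1, ha⟩ : Fin s.length) < ⟨b.1, hb⟩ from
          (by rw [Fin.lt_def] at hab; exact hab : a.1 < b.1))
  have hLnodup : L.Nodup := hLsorted.imp (fun h => ne_of_lt h)
  have hjF_not_s : jF ∉ s := by
    intro hmem
    exact hjFnot ((Finset.mem_sort (α := Fin m) (· ≤ ·)).mp hmem)
  have hLmem : ∀ x : Fin m, x ∈ L ↔ x ∈ supp m w := by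
    intro x
    rw [hw_supp, Finset.mem_insert, Finset.mem_erase]
    constructor
    · intro hx
      obtain ⟨i, hi⟩ := List.mem_iff_get.mp hx
      have hilen : i.1 < s.length := by omega
      have := hLget i.1 hilen
      rw [show (⟨i.1, by omega⟩ : Fin L.length) = i from rfl] at this
      rw [this] at hi
      by_cases hcase : istar.1 = i.1
      · rw [if_pos hcase] at hi
        exact Or.inl hi.symm
      · rw [if_neg hcase] at hi
        right
        constructor
        · intro hxj
          apply hcase
          have : s.get ⟨i.1, hilen⟩ = s.get istar := by rw [hi, hxj]
          have := smono.injective this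
          exact (congrArg Fin.val this).symm
        · rw [← hi]
          rw [← Finset.mem_sort (α := Fin m) (· ≤ ·)]
          exact List.get_mem s ⟨i.1, hilen⟩
    · intro hx
      rcases hx with hx | ⟨hxne, hxmem⟩
      · subst hx
        apply List.mem_iff_get.mpr
        refine ⟨⟨istar.1, by omega⟩, ?_⟩
        rw [hLget istar.1 istar.2, if_pos rfl]
      · have hxmem' : x ∈ s := (Finset.mem_sort (α := Fin m) (· ≤ ·)).mpr hxmem
        obtain ⟨i, hi⟩ := List.mem_iff_get.mp hxmem'
        apply List.mem_iff_get.mpr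
        refine ⟨⟨i.1, by omega⟩, ?_⟩
        rw [hLget i.1 i.2]
        rw [if_neg ?_]
        · rw [show (⟨i.1, i.2⟩ : Fin s.length) = i from rfl]; exact hi
        · intro hcon
          apply hxne
          rw [← hi]
          congr 1
          exact Fin.ext hcon.symm
  have hsw : sortedSupp m w = L := by
    refine (fun hp h1 h2 => List.Perm.eq_of_pairwise' (r := (· ≤ ·)) h1 h2 hp) ?_ ?_ ?_
    · apply List.perm_of_nodup_nodup_toFinset_eq (Finset.sort_nodup _ _) hLnodup
      ext x
      rw [List.mem_toFinset, List.mem_toFinset, Finset.mem_sort, hLmem x]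
    · exact Finset.pairwise_sort _ _
    · exact hLsorted.imp (fun h => le_of_lt h)
  have hcardw : (supp m w).card = (supp m v).card := by
    have c1 : (supp m w).card = (sortedSupp m w).length := (Finset.length_sort _).symm
    have c2 : (supp m u).card = s.length := (Finset.length_sort _).symm
    rw [c1, hsw, hLlen, ← c2, h.1]
  refine ⟨(jV : ℕ), hjm, huj, hujF, ⟨hcardw, ?_⟩, hrho⟩
  intro i hu' hv'
  have hil : i < L.length := by rw [← hsw]; exact hu'
  have his : i < s.length := by omega
  have hget : (sortedSupp m w).get ⟨i, hu'⟩ = L.get ⟨i, hil⟩ := by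
    simp only [List.get_eq_getElem]
    exact List.getElem_of_eq hsw hu'
  have := hLget i his
  rw [show (⟨i, by omega⟩ : Fin L.length) = ⟨i, hil⟩ from rfl] at this
  rw [hget, this]
  by_cases hcase : istar.1 = i
  · rw [if_pos hcase]
    have h1 : ((jF : Fin m) : ℕ) = (jV : ℕ) + 1 := rfl
    have h2 : (jV : ℕ) < (t.get (Fin.cast hl istar) : ℕ) := histar_lt
    have h3 : t.get (Fin.cast hl istar) = t.get ⟨i, hv'⟩ := by
      congr 1
      exact Fin.ext hcase
    rw [Fin.le_def, h1, ← h3]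
    omega
  · rw [if_neg hcase]
    exact h.2 i his hv'

lemma rho_le (m : ℕ) (u : Fin m → Bool) : rho m u ≤ m * m := by
  have h1 : rho m u ≤ ∑ i : Fin m, ((i : ℕ) + 1) :=
    Finset.sum_le_sum_of_subset (Finset.filter_subset _ _)
  have h2 : ∑ i : Fin m, ((i : ℕ) + 1) ≤ Finset.univ.card • m :=
    Finset.sum_le_card_nsmul Finset.univ _ m (fun i _ => by have := i.2; omega)
  simp only [Finset.card_univ, Fintype.card_fin, smul_eq_mul] at h2
  omega

lemma relH_le (m : ℕ) : ∀ (n : ℕ) (u v : Fin m → Bool), relH m u v →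
    m * m + 1 - rho m u ≤ n →
    ∀ {p : ℝ}, p ∈ Set.Icc (0:ℝ) 1 → RelC m u p ≤ RelC m v p := by
  intro n
  induction n with
  | zero =>
    intro u v hrel hb p hp
    by_cases he : u = v
    · subst he; exact le_refl _
    · obtain ⟨j, hj, h1, h2, hrel', hrho'⟩ := step_lemma m u v hrel he
      have hle := rho_le m
        (fun k => if k = ⟨j, by omega⟩ then false else if k = ⟨j+1, hj⟩ then true else u k)
      omega
  | succ n ih =>
    intro u v hrel hb p hp
    by_cases he : u = v
    · subst he; exact le_refl _
    · obtain ⟨j, hj, h1, h2, hrel', hrho'⟩ := step_lemma m u v hrel he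
      have hle := rho_le m
        (fun k => if k = ⟨j, by omega⟩ then false else if k = ⟨j+1, hj⟩ then true else u k)
      calc RelC m u p
          ≤ RelC m (fun k => if k = ⟨j, by omega⟩ then false
              else if k = ⟨j+1, hj⟩ then true else u k) p :=
            RelC_swap m u j hj h1 h2 hp
        _ ≤ RelC m v p := ih _ v hrel' (by omega) hp

/-- if `u ≼_SH v` then `Rel(C^u;p) ≤ Rel(C^v;p)` on `[0,1]`. -/
theorem rel_le_of_relSH (m : ℕ) (hm : 0 < m) (u v : Fin m → Bool)
    (h : relSH m u v) :
    ∀ p ∈ Set.Icc (0:ℝ) 1, RelC m u p ≤ RelC m v p := by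
  intro p hp
  rcases h with ⟨_, hsub⟩ | hH
  · exact RelC_pointwise m u v
      (fun i hi => mem_supp_iff.mp (hsub (mem_supp_iff.mpr hi))) hp
  · exact relH_le m (m * m + 1 - rho m u) u v hH le_rfl hp
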